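/- (Stability) Let X, Y be Hilbert spaces, K : X → Y weakly sequentially continuous, R : X → [0,∞] coercive and weakly sequentially lower semi-continuous, and D : Y × Y → [0,∞] satisfy: (i) D is sequentially lower semi-continuous w.r.t. weak convergence in the first argument and norm convergence in the second; (ii) D(y, yₙ) → 0 implies yₙ → y in norm; (iii) D(y, yₙ) → 0 implies D(z, yₙ) → D(z, y) for every z with D(z, y) < ∞. Fix y ∈ Y and α > 0 with some x⋆ satisfying D(Kx⋆, y) + αR(x⋆) < ∞. Let yₙ satisfy D(y, yₙ) → 0 and let xₙ minimize x ↦ D(Kx, yₙ) + αR(x). Then (xₙ) has a weakly convergent subsequence, every weak accumulation point x‡ minimizes x ↦ D(Kx, y) + αR(x), and along any subsequence converging weakly to x‡ one has R(x_{τ(n)}) → R(x‡). -/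

import Mathlib

open Filter Topology ENNReal
open scoped InnerProductSpace

lemma ennreal_le_liminf_add (u v : ℕ → ℝ≥0∞) :
    liminf u atTop + liminf v atTop ≤ liminf (fun n => u n + v n) atTop := by
  have hu : Monotone fun n : ℕ => ⨅ i ≥ n, u i := fun m n h =>
    le_iInf₂ fun i hi => iInf₂_le i (h.trans hi)
  have hv : Monotone fun n : ℕ => ⨅ i ≥ n, v i := fun m n h =>
    le_iInf₂ fun i hi => iInf₂_le i (h.trans hi)
  rw [liminf_eq_iSup_iInf_of_nat (u := u), liminf_eq_iSup_iInf_of_nat (u := v),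
    liminf_eq_iSup_iInf_of_nat, ENNReal.iSup_add_iSup_of_monotone hu hv]
  exact iSup_mono fun n =>
    le_iInf₂ fun i hi => add_le_add (iInf₂_le i hi) (iInf₂_le i hi)

lemma ennreal_const_mul_le_liminf (a : ℝ≥0∞) (u : ℕ → ℝ≥0∞) :
    a * liminf u atTop ≤ liminf (fun n => a * u n) atTop := by
  have h := ENNReal.le_liminf_mul (f := atTop) (u := fun _ : ℕ => a) (v := u)
  simpa [Pi.mul_def, liminf_const] using h

/-- Weak convergence of a sequence in an inner product space. -/
def WeakConv {X : Type*} [NormedAddCommGroup X] [InnerProductSpace ℝ X]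
    (x : ℕ → X) (x0 : X) : Prop :=
  ∀ y : X, Tendsto (fun n => ⟪x n, y⟫_ℝ) atTop (nhds ⟪x0, y⟫_ℝ)

/-- A bounded sequence in a Hilbert space has a weakly convergent subsequence. -/
lemma weak_compactness {X : Type*} [NormedAddCommGroup X] [InnerProductSpace ℝ X]
    [CompleteSpace X] (x : ℕ → X) (C : ℝ) (hC : ∀ n, ‖x n‖ ≤ C) :
    ∃ (τ : ℕ → ℕ) (x0 : X), StrictMono τ ∧ WeakConv (fun n => x (τ n)) x0 := by
  have hC0 : 0 ≤ C := le_trans (norm_nonneg _) (hC 0)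
  -- diagonal extraction via compactness of a product of intervals
  have hmem : ∀ n, (fun m => ⟪x n, x m⟫_ℝ) ∈ Set.pi Set.univ
      (fun _ : ℕ => Set.Icc (-(C * C)) (C * C)) := by
    intro n m _
    have h1 : |⟪x n, x m⟫_ℝ| ≤ ‖x n‖ * ‖x m‖ := abs_real_inner_le_norm _ _
    have h2 : ‖x n‖ * ‖x m‖ ≤ C * C :=
      mul_le_mul (hC n) (hC m) (norm_nonneg _) hC0
    exact abs_le.mp (h1.trans h2)
  have hcomp : IsCompact (Set.pi Set.univ fun _ : ℕ => Set.Icc (-(C * C)) (C * C)) :=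
    isCompact_univ_pi fun _ => isCompact_Icc
  obtain ⟨L, -, τ, hτ, hLτ⟩ := hcomp.tendsto_subseq hmem
  have hptwise : ∀ m, Tendsto (fun n => ⟪x (τ n), x m⟫_ℝ) atTop (𝓝 (L m)) := by
    intro m
    exact (tendsto_pi_nhds.mp hLτ) m
  -- the set of good test vectors is a closed submodule
  let S : Submodule ℝ X :=
    { carrier := {z | ∃ l : ℝ, Tendsto (fun n => ⟪x (τ n), z⟫_ℝ) atTop (𝓝 l)}
      add_mem' := by
        rintro z w ⟨l1, h1⟩ ⟨l2, h2⟩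
        exact ⟨l1 + l2, by simpa [inner_add_right] using h1.add h2⟩
      zero_mem' := ⟨0, by simp⟩
      smul_mem' := by
        rintro c z ⟨l, h1⟩
        exact ⟨c * l, by simpa [real_inner_smul_right] using h1.const_mul c⟩ }
  have hSclosed : IsClosed (S : Set X) := by
    refine isClosed_of_closure_subset fun z hz => ?_
    have hcauchy : CauchySeq (fun n => ⟪x (τ n), z⟫_ℝ) := by
      rw [Metric.cauchySeq_iff]
      intro ε hε
      have hC' : (0 : ℝ) < max C 1 := lt_of_lt_of_le one_pos (le_max_right _ _)
      obtain ⟨z', hz'S, hz'd⟩ := Metric.mem_closure_iff.mp hz (ε / (3 * max C 1))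
        (by positivity)
      obtain ⟨l, hl⟩ := hz'S
      obtain ⟨N, hN⟩ := Metric.cauchySeq_iff.mp hl.cauchySeq (ε / 3) (by positivity)
      refine ⟨N, fun m hm n hn => ?_⟩
      have key : ∀ k, |⟪x (τ k), z⟫_ℝ - ⟪x (τ k), z'⟫_ℝ| < ε / 3 := by
        intro k
        have h1 : ⟪x (τ k), z⟫_ℝ - ⟪x (τ k), z'⟫_ℝ = ⟪x (τ k), z - z'⟫_ℝ := by
          rw [inner_sub_right]
        rw [h1]
        have h2 : |⟪x (τ k), z - z'⟫_ℝ| ≤ ‖x (τ k)‖ * ‖z - z'‖ := abs_real_inner_le_norm _ _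
        have h3 : ‖x (τ k)‖ * ‖z - z'‖ ≤ max C 1 * ‖z - z'‖ :=
          mul_le_mul_of_nonneg_right ((hC _).trans (le_max_left _ _)) (norm_nonneg _)
        have h4 : ‖z - z'‖ < ε / (3 * max C 1) := by rwa [← dist_eq_norm]
        have h5 : max C 1 * ‖z - z'‖ < max C 1 * (ε / (3 * max C 1)) :=
          mul_lt_mul_of_pos_left h4 hC'
        have h6 : max C 1 * (ε / (3 * max C 1)) = ε / 3 := by
          field_simp
        linarith [h2.trans h3]
      have hmid := hN m hm n hn
      rw [Real.dist_eq] at hmid ⊢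
      have km := key m
      have kn := key n
      have : ⟪x (τ m), z⟫_ℝ - ⟪x (τ n), z⟫_ℝ =
          (⟪x (τ m), z⟫_ℝ - ⟪x (τ m), z'⟫_ℝ) + (⟪x (τ m), z'⟫_ℝ - ⟪x (τ n), z'⟫_ℝ)
            + (⟪x (τ n), z'⟫_ℝ - ⟪x (τ n), z⟫_ℝ) := by ring
      rw [this]
      calc |_ + _ + _| ≤ |⟪x (τ m), z⟫_ℝ - ⟪x (τ m), z'⟫_ℝ| +
            |⟪x (τ m), z'⟫_ℝ - ⟪x (τ n), z'⟫_ℝ| + |⟪x (τ n), z'⟫_ℝ - ⟪x (τ n), z⟫_ℝ| :=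
          (abs_add_le _ _).trans (add_le_add_left (abs_add_le _ _) _)
        _ < ε := by
          rw [abs_sub_comm (⟪x (τ n), z'⟫_ℝ)] at *
          linarith
    exact cauchySeq_tendsto_of_complete hcauchy
  have hspan_le : Submodule.span ℝ (Set.range x) ≤ S :=
    Submodule.span_le.mpr (by rintro _ ⟨m, rfl⟩; exact ⟨L m, hptwise m⟩)
  have horth_le : (Submodule.span ℝ (Set.range x))ᗮ ≤ S := by
    intro z hz
    have h0 : ∀ n, ⟪x (τ n), z⟫_ℝ = 0 := fun n =>
      (Submodule.mem_orthogonal _ z).mp hz (x (τ n)) (Submodule.subset_span ⟨τ n, rfl⟩)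
    exact ⟨0, by simp [h0]⟩
  have hS_top : S = ⊤ := by
    have h1 : Submodule.span ℝ (Set.range x) ⊔ (Submodule.span ℝ (Set.range x))ᗮ ≤ S :=
      sup_le hspan_le horth_le
    have h2 := Submodule.topologicalClosure_minimal _ h1 hSclosed
    rw [eq_top_iff]
    refine le_trans ?_ h2
    have h3 : (Submodule.span ℝ (Set.range x) ⊔ (Submodule.span ℝ (Set.range x))ᗮ)ᗮ = ⊥ := by
      rw [← Submodule.inf_orthogonal]
      exact Submodule.inf_orthogonal_eq_bot _
    rw [← Submodule.orthogonal_orthogonal_eq_closure, h3, Submodule.bot_orthogonal_eq_top]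
  have hall : ∀ z : X, ∃ l : ℝ, Tendsto (fun n => ⟪x (τ n), z⟫_ℝ) atTop (𝓝 l) := fun z => by
    have : z ∈ S := hS_top ▸ Submodule.mem_top
    exact this
  choose f hf using hall
  have hadd : ∀ z w, f (z + w) = f z + f w := fun z w =>
    tendsto_nhds_unique (hf (z + w)) (by simpa [inner_add_right] using (hf z).add (hf w))
  have hsmul : ∀ (c : ℝ) z, f (c • z) = c * f z := fun c z =>
    tendsto_nhds_unique (hf (c • z)) (by simpa [real_inner_smul_right] using (hf z).const_mul c)
  let F : X →ₗ[ℝ] ℝ :=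
    { toFun := f
      map_add' := hadd
      map_smul' := by intro c z; simpa using hsmul c z }
  have hbound : ∀ z, ‖F z‖ ≤ C * ‖z‖ := by
    intro z
    have h1 : Tendsto (fun n => |⟪x (τ n), z⟫_ℝ|) atTop (𝓝 |f z|) := (hf z).abs
    have h2 : |f z| ≤ C * ‖z‖ := by
      refine le_of_tendsto h1 (Eventually.of_forall fun n => ?_)
      exact (abs_real_inner_le_norm _ _).trans
        (mul_le_mul_of_nonneg_right (hC _) (norm_nonneg _))
    rw [Real.norm_eq_abs]; exact h2
  let F' : X →L[ℝ] ℝ := F.mkContinuous C hbound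
  refine ⟨τ, (InnerProductSpace.toDual ℝ X).symm F', hτ, fun z => ?_⟩
  have h3 : ⟪(InnerProductSpace.toDual ℝ X).symm F', z⟫_ℝ = F' z :=
    InnerProductSpace.toDual_symm_apply
  rw [h3]
  exact hf z

theorem anett_stability
    {X : Type*} [NormedAddCommGroup X] [InnerProductSpace ℝ X] [CompleteSpace X]
    {Y : Type*} [NormedAddCommGroup Y] [InnerProductSpace ℝ Y] [CompleteSpace Y]
    (K : X → Y)
    (hK : ∀ (x : ℕ → X) (x0 : X), WeakConv x x0 → WeakConv (fun n => K (x n)) (K x0))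
    (R : X → ℝ≥0∞)
    (hcoercive : ∀ x : ℕ → X,
      (∃ M : ℝ≥0∞, M ≠ ⊤ ∧ ∀ n, R (x n) ≤ M) → ∃ C : ℝ, ∀ n, ‖x n‖ ≤ C)
    (hRlsc : ∀ (x : ℕ → X) (x0 : X), WeakConv x x0 →
      R x0 ≤ Filter.liminf (fun n => R (x n)) atTop)
    (D : Y → Y → ℝ≥0∞)
    -- (i) lower semi-continuity: weak convergence in the first, norm in the second argument
    (hDlsc : ∀ (useq : ℕ → Y) (u : Y) (vseq : ℕ → Y) (v : Y),
      WeakConv useq u → Tendsto vseq atTop (nhds v) →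
      D u v ≤ Filter.liminf (fun n => D (useq n) (vseq n)) atTop)
    -- (ii) D-convergence implies norm convergence
    (hDnorm : ∀ (v : Y) (vseq : ℕ → Y),
      Tendsto (fun n => D v (vseq n)) atTop (nhds 0) → Tendsto vseq atTop (nhds v))
    -- (iii) continuity property
    (hDcont : ∀ (v : Y) (vseq : ℕ → Y),
      Tendsto (fun n => D v (vseq n)) atTop (nhds 0) →
      ∀ z : Y, D z v ≠ ⊤ → Tendsto (fun n => D z (vseq n)) atTop (nhds (D z v)))
    (y : Y) (α : ℝ) (hα : 0 < α)
    (hproper : ∃ xs : X, D (K xs) y + ENNReal.ofReal α * R xs ≠ ⊤)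
    (yseq : ℕ → Y) (hy : Tendsto (fun n => D y (yseq n)) atTop (nhds 0))
    (x : ℕ → X)
    (hxmin : ∀ n, ∀ x' : X,
      D (K (x n)) (yseq n) + ENNReal.ofReal α * R (x n) ≤
        D (K x') (yseq n) + ENNReal.ofReal α * R x') :
    (∃ (τ : ℕ → ℕ) (xdag : X), StrictMono τ ∧ WeakConv (fun n => x (τ n)) xdag) ∧
    (∀ (τ : ℕ → ℕ) (xdag : X), StrictMono τ → WeakConv (fun n => x (τ n)) xdag →
      (∀ x' : X, D (K xdag) y + ENNReal.ofReal α * R xdag ≤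
        D (K x') y + ENNReal.ofReal α * R x') ∧
      Tendsto (fun n => R (x (τ n))) atTop (nhds (R xdag))) := by
  set a := ENNReal.ofReal α with ha_def
  have ha0 : a ≠ 0 := by
    simp only [ha_def, ne_eq, ENNReal.ofReal_eq_zero, not_le]
    exact hα
  have hatop : a ≠ ⊤ := ENNReal.ofReal_ne_top
  obtain ⟨xs, hxs⟩ := hproper
  have hDs_ne : D (K xs) y ≠ ⊤ := fun h => hxs (by simp [h])
  have haR_ne : a * R xs ≠ ⊤ := fun h => hxs (by simp [h])
  have ynorm : Tendsto yseq atTop (𝓝 y) := hDnorm y yseq hy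
  -- the key upper bound on limsup along any subsequence
  have key : ∀ σ : ℕ → ℕ, StrictMono σ → ∀ x' : X, D (K x') y ≠ ⊤ →
      limsup (fun n => D (K (x (σ n))) (yseq (σ n)) + a * R (x (σ n))) atTop ≤
        D (K x') y + a * R x' := by
    intro σ hσ x' hx'
    have h1 : Tendsto (fun n => D (K x') (yseq (σ n)) + a * R x') atTop
        (𝓝 (D (K x') y + a * R x')) :=
      ((hDcont y yseq hy (K x') hx').comp hσ.tendsto_atTop).add tendsto_const_nhds
    calc limsup (fun n => D (K (x (σ n))) (yseq (σ n)) + a * R (x (σ n))) atTop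
        ≤ limsup (fun n => D (K x') (yseq (σ n)) + a * R x') atTop :=
          limsup_le_limsup (Eventually.of_forall fun n => hxmin (σ n) x')
      _ = D (K x') y + a * R x' := h1.limsup_eq
  constructor
  · -- existence of a weakly convergent subsequence
    have hDtend := hDcont y yseq hy (K xs) hDs_ne
    have hev : ∀ᶠ n in atTop, D (K xs) (yseq n) < D (K xs) y + 1 :=
      hDtend.eventually_lt_const (ENNReal.lt_add_right hDs_ne one_ne_zero)
    obtain ⟨N, hN⟩ := eventually_atTop.mp hev
    have hM : (D (K xs) y + 1 + a * R xs) / a ≠ ⊤ :=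
      (ENNReal.div_lt_top
        (ENNReal.add_ne_top.mpr ⟨ENNReal.add_ne_top.mpr ⟨hDs_ne, ENNReal.one_ne_top⟩, haR_ne⟩)
        ha0).ne
    have hRb : ∀ n ≥ N, R (x n) ≤ (D (K xs) y + 1 + a * R xs) / a := by
      intro n hn
      have h2 : a * R (x n) ≤ D (K xs) y + 1 + a * R xs :=
        calc a * R (x n) ≤ D (K (x n)) (yseq n) + a * R (x n) := le_add_self
          _ ≤ D (K xs) (yseq n) + a * R xs := hxmin n xs
          _ ≤ D (K xs) y + 1 + a * R xs := add_le_add_left (le_of_lt (hN n hn)) _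
      rw [ENNReal.le_div_iff_mul_le (Or.inl ha0) (Or.inl hatop), mul_comm]
      exact h2
    obtain ⟨C0, hC0⟩ := hcoercive (fun n => x (n + N))
      ⟨_, hM, fun n => hRb (n + N) (Nat.le_add_left _ _)⟩
    have hbd : ∀ n, ‖x n‖ ≤ C0 + ∑ i ∈ Finset.range N, ‖x i‖ := by
      intro n
      have hC0nn : 0 ≤ C0 := le_trans (norm_nonneg _) (hC0 0)
      have hsum_nn : 0 ≤ ∑ i ∈ Finset.range N, ‖x i‖ :=
        Finset.sum_nonneg fun _ _ => norm_nonneg _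
      rcases lt_or_ge n N with h | h
      · have h1 : ‖x n‖ ≤ ∑ i ∈ Finset.range N, ‖x i‖ :=
          Finset.single_le_sum (f := fun i => ‖x i‖) (fun _ _ => norm_nonneg _)
            (Finset.mem_range.mpr h)
        linarith
      · have h1 := hC0 (n - N)
        rw [Nat.sub_add_cancel h] at h1
        linarith
    exact weak_compactness x _ hbd
  · -- every weak accumulation point is a minimizer, with R-convergence
    intro τ xdag hτ hwc
    have hyτ : Tendsto (fun n => yseq (τ n)) atTop (𝓝 y) := ynorm.comp hτ.tendsto_atTop
    have lscD : D (K xdag) y ≤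
        liminf (fun n => D (K (x (τ n))) (yseq (τ n))) atTop :=
      hDlsc _ _ _ _ (hK _ _ hwc) hyτ
    have lscR : R xdag ≤ liminf (fun n => R (x (τ n))) atTop := hRlsc _ _ hwc
    have haRd : a * R xdag ≤ liminf (fun n => a * R (x (τ n))) atTop :=
      le_trans (mul_le_mul_right lscR a) (ennreal_const_mul_le_liminf a _)
    have hmin : ∀ x' : X, D (K xdag) y + a * R xdag ≤ D (K x') y + a * R x' := by
      intro x'
      by_cases hfin : D (K x') y + a * R x' = ⊤
      · rw [hfin]; exact le_top
      · have hx' : D (K x') y ≠ ⊤ := fun h => hfin (by simp [h])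
        calc D (K xdag) y + a * R xdag
            ≤ liminf (fun n => D (K (x (τ n))) (yseq (τ n))) atTop +
              liminf (fun n => a * R (x (τ n))) atTop := add_le_add lscD haRd
          _ ≤ liminf (fun n => D (K (x (τ n))) (yseq (τ n)) + a * R (x (τ n))) atTop :=
              ennreal_le_liminf_add _ _
          _ ≤ limsup (fun n => D (K (x (τ n))) (yseq (τ n)) + a * R (x (τ n))) atTop :=
              liminf_le_limsup
          _ ≤ D (K x') y + a * R x' := key τ hτ x' hx'
    refine ⟨hmin, ?_⟩
    -- finiteness at the accumulation point
    have hsum_ne : D (K xdag) y + a * R xdag ≠ ⊤ := by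
      intro h
      exact hxs (top_le_iff.mp (h ▸ hmin xs))
    have hDd_ne : D (K xdag) y ≠ ⊤ := fun h => hsum_ne (by simp [h])
    have haRd_ne : a * R xdag ≠ ⊤ := fun h => hsum_ne (by simp [h])
    have hRd_ne : R xdag ≠ ⊤ := by
      intro h
      exact haRd_ne (by rw [h, ENNReal.mul_top ha0])
    -- limsup R ≤ R xdag
    have hlimsup : limsup (fun n => R (x (τ n))) atTop ≤ R xdag := by
      by_contra hcon
      push_neg at hcon
      obtain ⟨c, hc1, hc2⟩ := exists_between hcon
      have hfreq : ∃ᶠ n in atTop, c < R (x (τ n)) :=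
        frequently_lt_of_lt_limsup (by isBoundedDefault) hc2
      obtain ⟨σ, hσ, hcσ⟩ := extraction_of_frequently_atTop hfreq
      have hwc' : WeakConv (fun n => x (τ (σ n))) xdag := fun z =>
        (hwc z).comp hσ.tendsto_atTop
      have hyτσ : Tendsto (fun n => yseq (τ (σ n))) atTop (𝓝 y) :=
        ynorm.comp (hτ.comp hσ).tendsto_atTop
      have lscD' : D (K xdag) y ≤
          liminf (fun n => D (K (x (τ (σ n)))) (yseq (τ (σ n)))) atTop :=
        hDlsc _ _ _ _ (hK _ _ hwc') hyτσ
      have hac : a * c ≤ liminf (fun n => a * R (x (τ (σ n)))) atTop :=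
        le_liminf_of_le (by isBoundedDefault)
          (Eventually.of_forall fun n => mul_le_mul_right (le_of_lt (hcσ n)) a)
      have hchain : D (K xdag) y + a * c ≤ D (K xdag) y + a * R xdag :=
        calc D (K xdag) y + a * c
            ≤ liminf (fun n => D (K (x (τ (σ n)))) (yseq (τ (σ n)))) atTop +
              liminf (fun n => a * R (x (τ (σ n)))) atTop := add_le_add lscD' hac
          _ ≤ liminf (fun n => D (K (x (τ (σ n)))) (yseq (τ (σ n))) + a * R (x (τ (σ n)))) atTop :=
              ennreal_le_liminf_add _ _
          _ ≤ limsup (fun n => D (K (x (τ (σ n)))) (yseq (τ (σ n))) + a * R (x (τ (σ n)))) atTop :=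
              liminf_le_limsup
          _ ≤ D (K xdag) y + a * R xdag := key (τ ∘ σ) (hτ.comp hσ) xdag hDd_ne
      have h5 : a * c ≤ a * R xdag :=
        (ENNReal.add_le_add_iff_left hDd_ne).mp hchain
      have h6 : c ≤ R xdag := by
        rwa [ENNReal.mul_le_mul_iff_right ha0 hatop] at h5
      exact absurd h6 (not_le.mpr hc1)
    have hll : liminf (fun n => R (x (τ n))) atTop ≤ limsup (fun n => R (x (τ n))) atTop :=
      liminf_le_limsup
    have hliminf_eq : liminf (fun n => R (x (τ n))) atTop = R xdag :=
      le_antisymm (hll.trans hlimsup) lscR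
    have hlimsup_eq : limsup (fun n => R (x (τ n))) atTop = R xdag :=
      le_antisymm hlimsup (lscR.trans hll)
    exact tendsto_of_liminf_eq_limsup hliminf_eq hlimsup_eq
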